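/- Let x : Fin N → EuclideanSpace ℝ (Fin d) affinely span all of EuclideanSpace ℝ (Fin d) (affineSpan ℝ (Set.range x) = ⊤). For i ≠ j define the elementary loading F^(i,j) : Fin N → EuclideanSpace ℝ (Fin d) by F^(i,j) i = x i − x j, F^(i,j) j = x j − x i, and F^(i,j) ℓ = 0 for ℓ ∉ {i, j}. Then (a) every F^(i,j) is a balanced loading: ∑ ℓ, F^(i,j) ℓ = 0 and ∑ ℓ, (⟪F^(i,j) ℓ, v⟫ * ⟪x ℓ, w⟫ − ⟪x ℓ, v⟫ * ⟪F^(i,j) ℓ, w⟫) = 0 for all v, w; and (b) a loading g : Fin N → EuclideanSpace ℝ (Fin d) lies in the real linear span of {F^(i,j) : i ≠ j} if and only if g is balanced, i.e., ∑ ℓ, g ℓ = 0 and ∑ ℓ, (⟪g ℓ, v⟫ * ⟪x ℓ, w⟫ − ⟪x ℓ, v⟫ * ⟪g ℓ, w⟫) = 0 for all v, w. (Equivalently: the cone of admissible loadings A*_X, generated by the F^(i,j), spans the space B_X of balanced loadings, hence has nonempty interior relative to B_X.) -/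

import Mathlib

open scoped InnerProductSpace BigOperators

private lemma sum_two_pt {M : Type*} [AddCommMonoid M] {N : ℕ} {i j : Fin N} (hij : i ≠ j)
    (T : Fin N → M) (h0 : ∀ ℓ, ℓ ≠ i → ℓ ≠ j → T ℓ = 0) :
    ∑ ℓ, T ℓ = T i + T j := by
  classical
  have key : ∀ ℓ, T ℓ = (if ℓ = i then T i else 0) + (if ℓ = j then T j else 0) := by
    intro ℓ
    by_cases h1 : ℓ = i
    · subst h1; simp [hij]
    · by_cases h2 : ℓ = j
      · subst h2; simp [h1]
      · simp [h1, h2, h0 ℓ h1 h2]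
  rw [Finset.sum_congr rfl fun ℓ _ => key ℓ, Finset.sum_add_distrib,
    Finset.sum_ite_eq', Finset.sum_ite_eq']
  simp

private lemma Fbal {d N : ℕ} (x : Fin N → EuclideanSpace ℝ (Fin d))
    (F : Fin N → Fin N → (Fin N → EuclideanSpace ℝ (Fin d)))
    (hF : ∀ i j ℓ : Fin N, F i j ℓ =
      if ℓ = i then x i - x j else if ℓ = j then x j - x i else 0)
    {i j : Fin N} (hij : i ≠ j) :
    ∑ ℓ, F i j ℓ = 0 ∧
      ∀ v w : EuclideanSpace ℝ (Fin d),
        ∑ ℓ, (⟪F i j ℓ, v⟫_ℝ * ⟪x ℓ, w⟫_ℝ - ⟪x ℓ, v⟫_ℝ * ⟪F i j ℓ, w⟫_ℝ) = 0 := by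
  have hFi : F i j i = x i - x j := by rw [hF]; simp
  have hFj : F i j j = x j - x i := by rw [hF]; simp [hij, Ne.symm hij]
  have hF0 : ∀ ℓ, ℓ ≠ i → ℓ ≠ j → F i j ℓ = 0 := by
    intro ℓ h1 h2; rw [hF]; simp [h1, h2]
  constructor
  · rw [sum_two_pt hij _ hF0, hFi, hFj]; abel
  · intro v w
    rw [sum_two_pt hij _ (fun ℓ h1 h2 => by rw [hF0 ℓ h1 h2]; simp), hFi, hFj]
    simp only [inner_sub_left]
    ring


private lemma easy_dir {d N : ℕ} (x : Fin N → EuclideanSpace ℝ (Fin d))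
    (F : Fin N → Fin N → (Fin N → EuclideanSpace ℝ (Fin d)))
    (hbase : ∀ i j : Fin N, i ≠ j →
      (∑ ℓ, F i j ℓ = 0 ∧
        ∀ v w : EuclideanSpace ℝ (Fin d),
          ∑ ℓ, (⟪F i j ℓ, v⟫_ℝ * ⟪x ℓ, w⟫_ℝ - ⟪x ℓ, v⟫_ℝ * ⟪F i j ℓ, w⟫_ℝ) = 0))
    (g : Fin N → EuclideanSpace ℝ (Fin d))
    (hg : g ∈ Submodule.span ℝ {h | ∃ i j : Fin N, i ≠ j ∧ h = F i j}) :
    ∑ ℓ, g ℓ = 0 ∧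
      ∀ v w : EuclideanSpace ℝ (Fin d),
        ∑ ℓ, (⟪g ℓ, v⟫_ℝ * ⟪x ℓ, w⟫_ℝ - ⟪x ℓ, v⟫_ℝ * ⟪g ℓ, w⟫_ℝ) = 0 := by
  induction hg using Submodule.span_induction with
  | mem h hh =>
    obtain ⟨i, j, hij, rfl⟩ := hh
    exact hbase i j hij
  | zero => constructor <;> simp
  | add a b _ _ ha hb =>
    constructor
    · rw [Finset.sum_congr rfl fun ℓ _ => (Pi.add_apply a b ℓ : (a + b) ℓ = a ℓ + b ℓ),
        Finset.sum_add_distrib, ha.1, hb.1, add_zero]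
    · intro v w
      have key : ∀ ℓ : Fin N,
          ⟪(a + b) ℓ, v⟫_ℝ * ⟪x ℓ, w⟫_ℝ - ⟪x ℓ, v⟫_ℝ * ⟪(a + b) ℓ, w⟫_ℝ =
          (⟪a ℓ, v⟫_ℝ * ⟪x ℓ, w⟫_ℝ - ⟪x ℓ, v⟫_ℝ * ⟪a ℓ, w⟫_ℝ) +
          (⟪b ℓ, v⟫_ℝ * ⟪x ℓ, w⟫_ℝ - ⟪x ℓ, v⟫_ℝ * ⟪b ℓ, w⟫_ℝ) := by
        intro ℓ; simp only [Pi.add_apply, inner_add_left]; ring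
      rw [Finset.sum_congr rfl fun ℓ _ => key ℓ, Finset.sum_add_distrib, ha.2 v w, hb.2 v w,
        add_zero]
  | smul r a _ ha =>
    constructor
    · rw [Finset.sum_congr rfl fun ℓ _ => (Pi.smul_apply r a ℓ : (r • a) ℓ = r • a ℓ),
        ← Finset.smul_sum, ha.1, smul_zero]
    · intro v w
      have key : ∀ ℓ : Fin N,
          ⟪(r • a) ℓ, v⟫_ℝ * ⟪x ℓ, w⟫_ℝ - ⟪x ℓ, v⟫_ℝ * ⟪(r • a) ℓ, w⟫_ℝ =
          r * (⟪a ℓ, v⟫_ℝ * ⟪x ℓ, w⟫_ℝ - ⟪x ℓ, v⟫_ℝ * ⟪a ℓ, w⟫_ℝ) := by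
        intro ℓ; simp only [Pi.smul_apply, real_inner_smul_left]; ring
      rw [Finset.sum_congr rfl fun ℓ _ => key ℓ, ← Finset.mul_sum, ha.2 v w, mul_zero]

private lemma hard_dir {d N : ℕ} (x : Fin N → EuclideanSpace ℝ (Fin d))
    (hspan : affineSpan ℝ (Set.range x) = ⊤)
    (F : Fin N → Fin N → (Fin N → EuclideanSpace ℝ (Fin d)))
    (hF : ∀ i j ℓ : Fin N, F i j ℓ =
      if ℓ = i then x i - x j else if ℓ = j then x j - x i else 0)
    (g : Fin N → EuclideanSpace ℝ (Fin d))
    (h1 : ∑ ℓ, g ℓ = 0)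
    (h2 : ∀ v w : EuclideanSpace ℝ (Fin d),
      ∑ ℓ, (⟪g ℓ, v⟫_ℝ * ⟪x ℓ, w⟫_ℝ - ⟪x ℓ, v⟫_ℝ * ⟪g ℓ, w⟫_ℝ) = 0) :
    g ∈ Submodule.span ℝ {h | ∃ i j : Fin N, i ≠ j ∧ h = F i j} := by
  classical
  by_contra hg
  obtain ⟨f, hfg, hfmap⟩ :=
    Submodule.exists_dual_map_eq_bot_of_notMem hg inferInstance
  -- f vanishes on each elementary loading
  have hfF : ∀ i j : Fin N, i ≠ j → f (F i j) = 0 := by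
    intro i j hij
    have hmem : F i j ∈ Submodule.span ℝ {h | ∃ i j : Fin N, i ≠ j ∧ h = F i j} :=
      Submodule.subset_span ⟨i, j, hij, rfl⟩
    have hm2 : f (F i j) ∈ (Submodule.span ℝ {h | ∃ i j : Fin N, i ≠ j ∧ h = F i j}).map f :=
      Submodule.mem_map_of_mem hmem
    rw [hfmap] at hm2
    simpa using hm2
  -- represent f by vectors φ ℓ
  set φ : Fin N → EuclideanSpace ℝ (Fin d) := fun ℓ =>
    (InnerProductSpace.toDual ℝ (EuclideanSpace ℝ (Fin d))).symm
      (LinearMap.toContinuousLinearMap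
        (f.comp (LinearMap.single ℝ (fun _ : Fin N => EuclideanSpace ℝ (Fin d)) ℓ)))
    with hφdef
  have hφ : ∀ (ℓ : Fin N) (v : EuclideanSpace ℝ (Fin d)), ⟪φ ℓ, v⟫_ℝ = f (Pi.single ℓ v) := by
    intro ℓ v
    rw [hφdef]
    simp [InnerProductSpace.toDual_symm_apply]
  have hfrepr : ∀ h : Fin N → EuclideanSpace ℝ (Fin d), f h = ∑ ℓ, ⟪φ ℓ, h ℓ⟫_ℝ := by
    intro h
    conv_lhs => rw [← Finset.univ_sum_single h, map_sum]
    exact Finset.sum_congr rfl fun ℓ _ => (hφ ℓ (h ℓ)).symm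
  -- N is positive
  have hN : 0 < N := by
    rcases Nat.eq_zero_or_pos N with h | h
    · exfalso
      subst h
      rw [Set.range_eq_empty x, AffineSubspace.span_empty] at hspan
      exact AffineSubspace.bot_ne_top ℝ (EuclideanSpace ℝ (Fin d)) (EuclideanSpace ℝ (Fin d)) hspan
    · exact h
  set i0 : Fin N := ⟨0, hN⟩ with hi0
  set u : Fin N → EuclideanSpace ℝ (Fin d) := fun ℓ => x ℓ - x i0 with hu
  set ψ : Fin N → EuclideanSpace ℝ (Fin d) := fun ℓ => φ ℓ - φ i0 with hψ
  -- the differences span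
  have hspanu : Submodule.span ℝ (Set.range u) = ⊤ := by
    have hv : vectorSpan ℝ (Set.range x) = ⊤ := by
      rw [← direction_affineSpan, hspan]
      exact AffineSubspace.direction_top ℝ _ _
    rw [vectorSpan_eq_span_vsub_set_right ℝ (Set.mem_range_self i0)] at hv
    have himg : (· -ᵥ x i0) '' Set.range x = Set.range u := by
      rw [← Set.range_comp]
      ext y
      simp [hu, Function.comp, vsub_eq_sub]
    rwa [himg] at hv
  -- key antisymmetry relation
  have K' : ∀ i j : Fin N, ⟪φ i, x j⟫_ℝ + ⟪φ j, x i⟫_ℝ = ⟪φ i, x i⟫_ℝ + ⟪φ j, x j⟫_ℝ := by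
    intro i j
    by_cases hij : i = j
    · subst hij; ring
    · have hz := hfF i j hij
      rw [hfrepr] at hz
      have hFi : F i j i = x i - x j := by rw [hF]; simp
      have hFj : F i j j = x j - x i := by rw [hF]; simp [hij, Ne.symm hij]
      have hF0 : ∀ ℓ, ℓ ≠ i → ℓ ≠ j → F i j ℓ = 0 := by
        intro ℓ ha hb; rw [hF]; simp [ha, hb]
      rw [sum_two_pt hij _ (fun ℓ ha hb => by rw [hF0 ℓ ha hb]; simp), hFi, hFj] at hz
      simp only [inner_sub_right] at hz
      linarith
  have K : ∀ i j : Fin N, ⟪ψ i, u j⟫_ℝ + ⟪ψ j, u i⟫_ℝ = 0 := by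
    intro i j
    have e1 := K' i j
    have e2 := K' i i0
    have e3 := K' j i0
    simp only [hψ, hu, inner_sub_left, inner_sub_right]
    linarith
  -- linear combination maps
  set Φ : (Fin N → ℝ) →ₗ[ℝ] EuclideanSpace ℝ (Fin d) := Fintype.linearCombination ℝ u with hΦ
  set Ψ : (Fin N → ℝ) →ₗ[ℝ] EuclideanSpace ℝ (Fin d) := Fintype.linearCombination ℝ ψ with hΨ
  have hΦap : ∀ c, Φ c = ∑ i, c i • u i := fun c => rfl
  have hΨap : ∀ c, Ψ c = ∑ i, c i • ψ i := fun c => rfl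
  have hΦrange : LinearMap.range Φ = ⊤ := by
    rw [hΦ, Fintype.range_linearCombination, hspanu]
  have hΦsurj : Function.Surjective Φ := LinearMap.range_eq_top.mp hΦrange
  -- kernel inclusion
  have hker : ∀ c : Fin N → ℝ, Φ c = 0 → Ψ c = 0 := by
    intro c hc
    have hy : ∀ j, ⟪u j, Ψ c⟫_ℝ = 0 := by
      intro j
      have e1 : ⟪u j, Ψ c⟫_ℝ = ∑ i, c i * ⟪u j, ψ i⟫_ℝ := by
        rw [hΨap, inner_sum]
        exact Finset.sum_congr rfl fun i _ => real_inner_smul_right _ _ _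
      have e2 : ∑ i, c i * ⟪u j, ψ i⟫_ℝ = -⟪ψ j, Φ c⟫_ℝ := by
        rw [hΦap, inner_sum, ← Finset.sum_neg_distrib]
        refine Finset.sum_congr rfl fun i _ => ?_
        rw [real_inner_smul_right]
        have hk : ⟪u j, ψ i⟫_ℝ = -⟪ψ j, u i⟫_ℝ := by
          rw [real_inner_comm]
          linarith [K i j]
        rw [hk]
        ring
      rw [e1, e2, hc, inner_zero_right, neg_zero]
    have hmem : Ψ c ∈ Submodule.span ℝ (Set.range u) := hspanu ▸ Submodule.mem_top
    obtain ⟨c', hc'⟩ := Submodule.mem_span_range_iff_exists_fun ℝ |>.mp hmem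
    have hself : ⟪Ψ c, Ψ c⟫_ℝ = 0 := by
      conv_lhs => rw [← hc', sum_inner]
      rw [Finset.sum_eq_zero]
      intro i _
      rw [real_inner_smul_left, hc', hy i, mul_zero]
    exact inner_self_eq_zero.mp hself
  -- right inverse and the skew map A
  obtain ⟨σ, hσ⟩ := Φ.exists_rightInverse_of_surjective hΦrange
  set A : EuclideanSpace ℝ (Fin d) →ₗ[ℝ] EuclideanSpace ℝ (Fin d) := Ψ.comp σ with hA
  have hAΦ : ∀ c, A (Φ c) = Ψ c := by
    intro c
    have hz : Φ (σ (Φ c) - c) = 0 := by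
      rw [map_sub, sub_eq_zero]
      exact LinearMap.congr_fun hσ (Φ c)
    have hz2 := hker _ hz
    rw [map_sub, sub_eq_zero] at hz2
    simpa [hA] using hz2
  have hAu : ∀ ℓ, A (u ℓ) = ψ ℓ := by
    intro ℓ
    have h1' : Φ (Pi.single ℓ 1) = u ℓ := by
      rw [hΦ, Fintype.linearCombination_apply_single, one_smul]
    have h2' : Ψ (Pi.single ℓ 1) = ψ ℓ := by
      rw [hΨ, Fintype.linearCombination_apply_single, one_smul]
    rw [← h1', hAΦ, h2']
  have hskew : ∀ v w : EuclideanSpace ℝ (Fin d), ⟪A v, w⟫_ℝ + ⟪A w, v⟫_ℝ = 0 := by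
    intro v w
    obtain ⟨c, rfl⟩ := hΦsurj v
    obtain ⟨c', rfl⟩ := hΦsurj w
    rw [hAΦ, hAΦ]
    have e1 : ⟪Ψ c, Φ c'⟫_ℝ = ∑ i, ∑ j, c i * (c' j * ⟪ψ i, u j⟫_ℝ) := by
      rw [hΨap, hΦap, sum_inner]
      refine Finset.sum_congr rfl fun i _ => ?_
      rw [real_inner_smul_left, inner_sum, Finset.mul_sum]
      refine Finset.sum_congr rfl fun j _ => ?_
      rw [real_inner_smul_right]
    have e2 : ⟪Ψ c', Φ c⟫_ℝ = ∑ i, ∑ j, c i * (c' j * ⟪ψ j, u i⟫_ℝ) := by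
      rw [hΨap, hΦap, sum_inner]
      rw [Finset.sum_comm]
      refine Finset.sum_congr rfl fun i _ => ?_
      rw [real_inner_smul_left, inner_sum, Finset.mul_sum]
      refine Finset.sum_congr rfl fun j _ => ?_
      rw [real_inner_smul_right]
      ring
    rw [e1, e2, ← Finset.sum_add_distrib]
    rw [Finset.sum_eq_zero]
    intro i _
    rw [← Finset.sum_add_distrib]
    rw [Finset.sum_eq_zero]
    intro j _
    have hk := K i j
    linear_combination (c i * c' j) * hk
  -- decomposition into the standard basis
  have hdec : ∀ y : EuclideanSpace ℝ (Fin d), y = ∑ q, y q • EuclideanSpace.single q (1 : ℝ) := by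
    intro y
    have := (EuclideanSpace.basisFun (Fin d) ℝ).toBasis.sum_repr y
    simp only [OrthonormalBasis.coe_toBasis_repr_apply, EuclideanSpace.basisFun_repr,
      OrthonormalBasis.coe_toBasis, EuclideanSpace.basisFun_apply] at this
    exact this.symm
  set a : Fin d → Fin d → ℝ := fun p q =>
    ⟪A (EuclideanSpace.single q (1 : ℝ)), EuclideanSpace.single p (1 : ℝ)⟫_ℝ with hadef
  have ha : ∀ p q, a p q + a q p = 0 := fun p q =>
    hskew (EuclideanSpace.single q (1 : ℝ)) (EuclideanSpace.single p (1 : ℝ))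
  -- column sums of g vanish
  have hgp : ∀ p, ∑ ℓ, g ℓ p = 0 := by
    intro p
    have e := sum_inner (𝕜 := ℝ) Finset.univ g (EuclideanSpace.single p (1 : ℝ))
    rw [h1, inner_zero_left] at e
    have e2 : ∑ ℓ, ⟪g ℓ, EuclideanSpace.single p (1 : ℝ)⟫_ℝ = ∑ ℓ, g ℓ p := by
      refine Finset.sum_congr rfl fun ℓ _ => ?_
      rw [EuclideanSpace.inner_single_right]
      simp
    rw [e2] at e
    exact e.symm
  -- symmetry of the moment matrix
  have hM : ∀ p q, ∑ ℓ, g ℓ p * u ℓ q = ∑ ℓ, g ℓ q * u ℓ p := by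
    intro p q
    have ht := h2 (EuclideanSpace.single p (1 : ℝ)) (EuclideanSpace.single q (1 : ℝ))
    simp only [EuclideanSpace.inner_single_right, RCLike.conj_to_real, map_one, one_mul,
      conj_trivial] at ht
    have husub : ∀ ℓ (r : Fin d), u ℓ r = x ℓ r - x i0 r := fun ℓ r => rfl
    have e1 : ∑ ℓ, g ℓ p * u ℓ q = ∑ ℓ, g ℓ p * x ℓ q - (∑ ℓ, g ℓ p) * x i0 q := by
      rw [Finset.sum_mul, ← Finset.sum_sub_distrib]
      refine Finset.sum_congr rfl fun ℓ _ => ?_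
      rw [husub]; ring
    have e2 : ∑ ℓ, g ℓ q * u ℓ p = ∑ ℓ, g ℓ q * x ℓ p - (∑ ℓ, g ℓ q) * x i0 p := by
      rw [Finset.sum_mul, ← Finset.sum_sub_distrib]
      refine Finset.sum_congr rfl fun ℓ _ => ?_
      rw [husub]; ring
    have ht2 : ∑ ℓ, g ℓ p * x ℓ q = ∑ ℓ, g ℓ q * x ℓ p := by
      rw [← sub_eq_zero, ← Finset.sum_sub_distrib]
      rw [← ht]
      refine Finset.sum_congr rfl fun ℓ _ => ?_
      ring
    rw [e1, e2, hgp p, hgp q, ht2]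
    ring
  -- the main vanishing computation
  have hSzero : ∑ ℓ, ⟪ψ ℓ, g ℓ⟫_ℝ = 0 := by
    have hexp : ∀ ℓ, ⟪ψ ℓ, g ℓ⟫_ℝ = ∑ p, ∑ q, g ℓ p * (u ℓ q * a p q) := by
      intro ℓ
      rw [← hAu ℓ]
      conv_lhs => rw [hdec (g ℓ)]
      rw [inner_sum]
      refine Finset.sum_congr rfl fun p _ => ?_
      rw [real_inner_smul_right]
      have einner : ⟪A (u ℓ), EuclideanSpace.single p (1 : ℝ)⟫_ℝ = ∑ q, u ℓ q * a p q := by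
        conv_lhs => rw [hdec (u ℓ)]
        rw [map_sum, sum_inner]
        refine Finset.sum_congr rfl fun q _ => ?_
        rw [map_smul, real_inner_smul_left]
      rw [einner, Finset.mul_sum]
    rw [Finset.sum_congr rfl fun ℓ _ => hexp ℓ]
    rw [Finset.sum_comm]
    have step : ∀ p, ∑ ℓ, ∑ q, g ℓ p * (u ℓ q * a p q)
        = ∑ q, a p q * ∑ ℓ, g ℓ p * u ℓ q := by
      intro p
      rw [Finset.sum_comm]
      refine Finset.sum_congr rfl fun q _ => ?_
      rw [Finset.mul_sum]
      refine Finset.sum_congr rfl fun ℓ _ => ?_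
      ring
    rw [Finset.sum_congr rfl fun p _ => step p]
    set T := ∑ p, ∑ q, a p q * ∑ ℓ, g ℓ p * u ℓ q with hT
    have hswap : T = ∑ p, ∑ q, a q p * ∑ ℓ, g ℓ q * u ℓ p := by
      rw [hT]; exact Finset.sum_comm
    have hneg : ∑ p, ∑ q, a q p * ∑ ℓ, g ℓ q * u ℓ p = -T := by
      rw [hT, ← Finset.sum_neg_distrib]
      refine Finset.sum_congr rfl fun p _ => ?_
      rw [← Finset.sum_neg_distrib]
      refine Finset.sum_congr rfl fun q _ => ?_
      rw [hM q p]
      have := ha p q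
      linear_combination (∑ ℓ, g ℓ p * u ℓ q) * this
    have : T = -T := hswap.trans hneg
    linarith
  -- conclude
  apply hfg
  rw [hfrepr g]
  have hsplit : ∑ ℓ, ⟪φ ℓ, g ℓ⟫_ℝ = ∑ ℓ, ⟪ψ ℓ, g ℓ⟫_ℝ + ∑ ℓ, ⟪φ i0, g ℓ⟫_ℝ := by
    rw [← Finset.sum_add_distrib]
    refine Finset.sum_congr rfl fun ℓ _ => ?_
    simp only [hψ, inner_sub_left]
    ring
  have hsecond : ∑ ℓ, ⟪φ i0, g ℓ⟫_ℝ = 0 := by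
    rw [← inner_sum, h1, inner_zero_right]
  rw [hsplit, hSzero, hsecond, add_zero]

/-- The elementary loadings `F^(i,j)` (a single wire in tension from `x i` to
`x j`) are balanced, and they linearly span exactly the space of balanced
loadings; hence the admissible loading cone has nonempty interior relative to
the space of balanced loadings. -/
theorem elementary_loadings_span_balanced (d N : ℕ)
    (x : Fin N → EuclideanSpace ℝ (Fin d))
    (hspan : affineSpan ℝ (Set.range x) = ⊤)
    (F : Fin N → Fin N → (Fin N → EuclideanSpace ℝ (Fin d)))
    (hF : ∀ i j ℓ : Fin N, F i j ℓ =
      if ℓ = i then x i - x j else if ℓ = j then x j - x i else 0) :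
    (∀ i j : Fin N, i ≠ j →
      (∑ ℓ, F i j ℓ = 0 ∧
        ∀ v w : EuclideanSpace ℝ (Fin d),
          ∑ ℓ, (⟪F i j ℓ, v⟫_ℝ * ⟪x ℓ, w⟫_ℝ - ⟪x ℓ, v⟫_ℝ * ⟪F i j ℓ, w⟫_ℝ) = 0)) ∧
    (∀ g : Fin N → EuclideanSpace ℝ (Fin d),
      g ∈ Submodule.span ℝ {h | ∃ i j : Fin N, i ≠ j ∧ h = F i j} ↔
      (∑ ℓ, g ℓ = 0 ∧
        ∀ v w : EuclideanSpace ℝ (Fin d),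
          ∑ ℓ, (⟪g ℓ, v⟫_ℝ * ⟪x ℓ, w⟫_ℝ - ⟪x ℓ, v⟫_ℝ * ⟪g ℓ, w⟫_ℝ) = 0)) := by
  refine ⟨fun i j hij => Fbal x F hF hij, fun g => ⟨?_, ?_⟩⟩
  · exact fun hg => easy_dir x F (fun i j hij => Fbal x F hF hij) g hg
  · exact fun hb => hard_dir x hspan F hF g hb.1 hb.2
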